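/- Let G be a finite abelian group with |G| > 2 and G₀ ⊆ G a subset. If there exists an atom U over G₀ with cross number k(U) < 1, then G₀ is non-half-factorial and min Δ(G₀) ≤ exp(G) − 2. -/

import Mathlib

open Multiset

section Defs

variable {G : Type*} [AddCommGroup G]

/-- `S` is a zero-sum sequence over `G₀`: a multiset with entries in `G₀` and sum `0`. -/
def IsZeroSumSeq (G₀ : Set G) (S : Multiset G) : Prop :=
  (∀ x ∈ S, x ∈ G₀) ∧ S.sum = 0

/-- `S` is an atom over `G₀`: a nonempty zero-sum sequence over `G₀` that is not the
union of two nonempty zero-sum sequences over `G₀`. -/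
def IsAtomSeq (G₀ : Set G) (S : Multiset G) : Prop :=
  IsZeroSumSeq G₀ S ∧ S ≠ 0 ∧
    ∀ A B : Multiset G, IsZeroSumSeq G₀ A → IsZeroSumSeq G₀ B →
      A ≠ 0 → B ≠ 0 → S ≠ A + B

/-- The set of lengths of `B`: all `k` such that `B` is a union of `k` atoms over `G₀`. -/
def LengthSet (G₀ : Set G) (B : Multiset G) : Set ℕ :=
  {k | ∃ l : Multiset (Multiset G), Multiset.card l = k ∧
      (∀ A ∈ l, IsAtomSeq G₀ A) ∧ l.sum = B}

/-- The set of successive distances of a set of naturals. -/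
def DeltaOf (L : Set ℕ) : Set ℕ :=
  {d | ∃ x ∈ L, ∃ y ∈ L, x < y ∧ y - x = d ∧ ∀ z ∈ L, ¬(x < z ∧ z < y)}

/-- The set of distances `Δ(G₀)`. -/
def DeltaSet (G₀ : Set G) : Set ℕ :=
  {d | ∃ B : Multiset G, IsZeroSumSeq G₀ B ∧ B ≠ 0 ∧ d ∈ DeltaOf (LengthSet G₀ B)}

/-- `G₀` is half-factorial if `Δ(G₀) = ∅`. -/
def IsHalfFactorialSet (G₀ : Set G) : Prop := DeltaSet G₀ = ∅

/-- `G₀` is minimal non-half-factorial if `Δ(G₀) ≠ ∅` and every proper subset is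
half-factorial. -/
def IsMinNonHalfFactorial (G₀ : Set G) : Prop :=
  (DeltaSet G₀).Nonempty ∧ ∀ G₁ : Set G, G₁ ⊂ G₀ → DeltaSet G₁ = ∅

/-- The cross number `k(S) = Σ 1/ord(g)` of a multiset over `G`. -/
noncomputable def crossNumber (S : Multiset G) : ℚ :=
  (S.map (fun g => ((addOrderOf g : ℚ))⁻¹)).sum

/-- `G₀` is an LCN-set if every atom over `G₀` has cross number at least 1. -/
def IsLCNSet (G₀ : Set G) : Prop :=
  ∀ U : Multiset G, IsAtomSeq G₀ U → 1 ≤ crossNumber U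

/-- A subset of `G \ {0}` is independent if any integral linear relation on its elements
has all summands zero. -/
def IsIndependentSet (E : Set G) : Prop :=
  (0 : G) ∉ E ∧ ∀ s : Finset G, ↑s ⊆ E → ∀ f : G → ℤ,
    (∑ e ∈ s, f e • e) = 0 → ∀ e ∈ s, f e • e = 0

/-- `d` is a greatest common divisor of the set `S` of naturals. -/
def IsSetGcd (S : Set ℕ) (d : ℕ) : Prop :=
  (∀ s ∈ S, d ∣ s) ∧ ∀ e : ℕ, (∀ s ∈ S, e ∣ s) → e ∣ d

end Defs

/-- The set of minimal distances `Δ*(G)`. -/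
def DeltaStar (G : Type*) [AddCommGroup G] : Set ℕ :=
  {d | ∃ G₀ : Set G, (DeltaSet G₀).Nonempty ∧ d = sInf (DeltaSet G₀)}

/-- The `p`-rank of a finite abelian group: `log_p` of the order of the `p`-torsion
subgroup `{x | p • x = 0}`. -/
noncomputable def pRank (G : Type*) [AddCommGroup G] (p : ℕ) : ℕ :=
  Nat.log p (Nat.card {x : G // p • x = 0})

/-- The rank of a finite abelian group: the maximum of the `p`-ranks over all primes. -/
noncomputable def rankG (G : Type*) [AddCommGroup G] : ℕ :=
  sSup {r : ℕ | ∃ p : ℕ, p.Prime ∧ r = pRank G p}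

section Aux

open Multiset

variable {G : Type*} [AddCommGroup G] [Fintype G]

lemma sum_nsmul_multiset {M : Type*} [AddCommMonoid M] (n : ℕ) (U : Multiset M) :
    (n • U).sum = n • U.sum := by
  induction n with
  | zero => simp
  | succ k ih => rw [succ_nsmul, Multiset.sum_add, ih, succ_nsmul]

lemma atom_replicate {G₀ : Set G} {g : G} (hg : g ∈ G₀) :
    IsAtomSeq G₀ (replicate (addOrderOf g) g) := by
  have hpos : 0 < addOrderOf g := addOrderOf_pos g
  refine ⟨⟨fun x hx => by rwa [Multiset.eq_of_mem_replicate hx], by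
      rw [Multiset.sum_replicate]; exact addOrderOf_nsmul_eq_zero g⟩, ?_, ?_⟩
  · intro h
    have := congrArg Multiset.card h
    simp only [Multiset.card_replicate, Multiset.card_zero] at this
    omega
  · intro A B hA hB hA0 hB0 hEq
    have hAle : A ≤ replicate (addOrderOf g) g := by rw [hEq]; exact Multiset.le_add_right A B
    have hArep : A = replicate (Multiset.card A) g :=
      Multiset.eq_replicate_card.mpr fun x hx =>
        Multiset.eq_of_mem_replicate (Multiset.mem_of_le hAle hx)
    have hsum : (Multiset.card A) • g = 0 := by
      rw [← Multiset.sum_replicate, ← hArep]; exact hA.2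
    have hdvd : addOrderOf g ∣ Multiset.card A := addOrderOf_dvd_of_nsmul_eq_zero hsum
    have hcardA : 0 < Multiset.card A := Multiset.card_pos.mpr hA0
    have hle : addOrderOf g ≤ Multiset.card A := Nat.le_of_dvd hcardA hdvd
    have hcardB : 0 < Multiset.card B := Multiset.card_pos.mpr hB0
    have hcards : Multiset.card A + Multiset.card B = addOrderOf g := by
      have := congrArg Multiset.card hEq
      simp at this
      omega
    omega

lemma bind_rep_sum (n : ℕ) (U : Multiset G) (h : ∀ g ∈ U, addOrderOf g ∣ n) :
    (U.bind (fun g => replicate (n / addOrderOf g) (replicate (addOrderOf g) g))).sum = n • U := by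
  induction U using Multiset.induction with
  | empty => simp
  | cons a s ih =>
    rw [Multiset.cons_bind, Multiset.sum_add, ih (fun g hg => h g (Multiset.mem_cons_of_mem hg)),
      Multiset.sum_replicate, nsmul_replicate,
      Nat.div_mul_cancel (h a (Multiset.mem_cons_self a s)),
      ← Multiset.singleton_add, smul_add, Multiset.nsmul_singleton]

end Aux

/-- If `|G| > 2` and there is an atom `U` over `G₀` with `k(U) < 1`, then
`G₀` is non-half-factorial and `min Δ(G₀) ≤ exp(G) − 2`. -/
theorem stmt_4 {G : Type*} [AddCommGroup G] [Fintype G] (hG : 2 < Fintype.card G)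
    (G₀ : Set G) (U : Multiset G) (hU : IsAtomSeq G₀ U) (hkU : crossNumber U < 1) :
    (DeltaSet G₀).Nonempty ∧ sInf (DeltaSet G₀) ≤ AddMonoid.exponent G - 2 := by
  classical
  set n := AddMonoid.exponent G with hn
  have hnpos : 0 < n := AddMonoid.exponent_pos.mpr AddMonoid.ExponentExists.of_finite
  have hdvd : ∀ g : G, addOrderOf g ∣ n := fun g => AddMonoid.addOrder_dvd_exponent g
  have hordpos : ∀ g : G, 0 < addOrderOf g := fun g => addOrderOf_pos g
  -- card U ≥ 2
  have hU0 : U ≠ 0 := hU.2.1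
  have hcard1 : 1 ≤ Multiset.card U := Multiset.card_pos.mpr hU0
  have hcard2 : 2 ≤ Multiset.card U := by
    by_contra hlt
    have h1 : Multiset.card U = 1 := by omega
    obtain ⟨g, hg⟩ := Multiset.card_eq_one.mp h1
    have hg0 : g = 0 := by
      have := hU.1.2
      rw [hg] at this
      simpa using this
    have : crossNumber U = 1 := by
      rw [hg, hg0]
      simp [crossNumber]
    rw [this] at hkU
    exact lt_irrefl _ hkU
  set t := (U.map (fun g => n / addOrderOf g)).sum with htdef
  have ht2 : 2 ≤ t := by
    have : (U.map (fun _ => 1)).sum ≤ (U.map (fun g => n / addOrderOf g)).sum := by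
      apply Multiset.sum_map_le_sum_map
      intro g hg
      exact Nat.one_le_div_iff (hordpos g) |>.mpr (Nat.le_of_dvd hnpos (hdvd g))
    simp only [Multiset.map_const', Multiset.sum_replicate, smul_eq_mul, mul_one] at this
    omega
  have htQ : (t : ℚ) = n * crossNumber U := by
    rw [htdef, Nat.cast_multiset_sum, Multiset.map_map, crossNumber, ← Multiset.sum_map_mul_left]
    congr 1
    apply Multiset.map_congr rfl
    intro g hg
    simp only [Function.comp_apply]
    rw [Nat.cast_div (hdvd g) (by exact_mod_cast (hordpos g).ne'), div_eq_mul_inv]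
  have htn : t < n := by
    have h1 : (t : ℚ) < n := by
      rw [htQ]
      calc (n : ℚ) * crossNumber U < n * 1 := by
            apply mul_lt_mul_of_pos_left hkU
            exact_mod_cast hnpos
        _ = n := mul_one _
    exact_mod_cast h1
  set B := n • U with hB
  have hBzs : IsZeroSumSeq G₀ B := by
    constructor
    · intro x hx
      rw [hB, Multiset.mem_nsmul] at hx
      exact hU.1.1 x hx.2
    · rw [hB, sum_nsmul_multiset, hU.1.2, smul_zero]
  have hBcard : 0 < Multiset.card B := by
    rw [hB, Multiset.card_nsmul]
    exact Nat.mul_pos hnpos (by omega)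
  have hB0 : B ≠ 0 := by
    intro h
    rw [h] at hBcard
    simp at hBcard
  have hnL : n ∈ LengthSet G₀ B := by
    refine ⟨Multiset.replicate n U, Multiset.card_replicate _ _, ?_, ?_⟩
    · intro A hA
      rw [Multiset.eq_of_mem_replicate hA]
      exact hU
    · rw [Multiset.sum_replicate]
  have htL : t ∈ LengthSet G₀ B := by
    refine ⟨U.bind (fun g => Multiset.replicate (n / addOrderOf g)
        (Multiset.replicate (addOrderOf g) g)), ?_, ?_, ?_⟩
    · rw [Multiset.card_bind]
      congr 1
      apply Multiset.map_congr rfl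
      intro g hg
      simp
    · intro A hA
      rw [Multiset.mem_bind] at hA
      obtain ⟨g, hg, hAg⟩ := hA
      rw [Multiset.eq_of_mem_replicate hAg]
      exact atom_replicate (hU.1.1 g hg)
    · exact bind_rep_sum n U (fun g _ => hdvd g)
  set S := {z | z ∈ LengthSet G₀ B ∧ t < z} with hS
  have hSne : S.Nonempty := ⟨n, hnL, htn⟩
  set y := sInf S with hy
  obtain ⟨hyL, hty⟩ : y ∈ LengthSet G₀ B ∧ t < y := Nat.sInf_mem hSne
  have hyn : y ≤ n := Nat.sInf_le ⟨hnL, htn⟩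
  have hd : (y - t) ∈ DeltaSet G₀ := by
    have hdo : (y - t) ∈ DeltaOf (LengthSet G₀ B) := by
      simp only [DeltaOf, Set.mem_setOf_eq]
      refine ⟨t, htL, y, hyL, hty, rfl, ?_⟩
      rintro z hz ⟨h1, h2⟩
      have hzS : z ∈ S := ⟨hz, h1⟩
      exact absurd (Nat.sInf_le hzS) (not_le.mpr h2)
    exact ⟨B, hBzs, hB0, hdo⟩
  refine ⟨⟨y - t, hd⟩, le_trans (Nat.sInf_le hd) ?_⟩
  omega
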